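/- In the one-bidder commitment game with regular distribution F (virtual value φ_F(v) = v − (1−F(v))/f(v) increasing), the revenue-maximizing incentive-compatible mechanism allocates to a bidder of type v all queries with intrinsic price at most v if v ≥ r_MYE and nothing otherwise, with payment τ*(v) = r_MYE·H(r_MYE) + ∫_{r_MYE}^v z·h(z) dz for v ≥ r_MYE, where r_MYE = φ_F^{-1}(0). Equivalently, among all nondecreasing allocation functions χ with χ(v) ≤ v almost everywhere, χ*(v) = v·1{v ≥ r_MYE} maximizes E_v[φ_F(v)·H(χ(v))]. -/
import Mathlib


open Set MeasureTheory

theorem stmt3 (μ : Measure ℝ) [IsProbabilityMeasure μ]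
    (H φ : ℝ → ℝ) (rM : ℝ)
    (hsupp : ∀ᵐ v ∂μ, 0 ≤ v)
    (hHmono : Monotone H) (hH0 : H 0 = 0) (hHnonneg : ∀ z, 0 ≤ H z)
    (hφ : StrictMono φ) (hrM : φ rM = 0) (hrM0 : 0 ≤ rM)
    (χ : ℝ → ℝ) (hχmono : Monotone χ) (hχnonneg : ∀ v, 0 ≤ χ v)
    (hχle : ∀ᵐ v ∂μ, χ v ≤ v)
    (hint1 : Integrable (fun v => φ v * H (χ v)) μ)
    (hint2 : Integrable (fun v => φ v * H (if rM ≤ v then v else 0)) μ) :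
    ∫ v, φ v * H (χ v) ∂μ ≤ ∫ v, φ v * H (if rM ≤ v then v else 0) ∂μ := by
  refine integral_mono_ae hint1 hint2 ?_
  filter_upwards [hχle] with v hv
  by_cases h : rM ≤ v
  · simp only [h, if_true]
    have hφv : 0 ≤ φ v := hrM ▸ hφ.monotone h
    exact mul_le_mul_of_nonneg_left (hHmono hv) hφv
  · simp only [h, if_false, hH0, mul_zero]
    have hφv : φ v ≤ 0 := hrM ▸ (hφ (lt_of_not_ge h)).le
    exact mul_nonpos_of_nonpos_of_nonneg hφv (hHnonneg _)
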